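/- Let X̃ = {x ∈ ℝ^N : Σ_{k=0}^{N−1} x_k = C, x_k ≥ 0 for all k, and x_k = x_{N−k} for 1 ≤ k ≤ N−1}. Then X̃ is convex, S̃x has real entries for every x ∈ X̃, and ℱ = {f(u) : u ∈ ℝ^N, uᵀu = C} = {y ∈ ℝ^n : y = S̃x for some x ∈ X̃}; in particular, ℱ is a convex subset of ℝ^n. -/

import Mathlib

open scoped BigOperators
open Complex Matrix

noncomputable section

/-- Circular autocovariance: `r i = ∑ t, u t * u ((t - i) mod N)`. -/
def autocov (N n : ℕ) (u : Fin N → ℝ) : Fin n → ℝ :=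
  fun i => ∑ t : Fin N, u t * u ⟨(t.val + (N - i.val)) % N, Nat.mod_lt _ t.pos⟩

/-- The DFT matrix `W̃` with entries `N^{-1/2} e^{-j ϖ k t}`, `ϖ = 2π/N`. -/
def dft (N : ℕ) : Matrix (Fin N) (Fin N) ℂ := fun k t =>
  (Real.sqrt N : ℂ)⁻¹ * Complex.exp (-(Complex.I * (2 * Real.pi / N) * k.val * t.val))

/-- The matrix `S̃` with entries `e^{j ϖ i k}`. -/
def Stilde (N n : ℕ) : Matrix (Fin n) (Fin N) ℂ := fun i k =>
  Complex.exp (Complex.I * (2 * Real.pi / N) * i.val * k.val)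

/-- The matrix `S̃(γ)` with entries `γ e^{-j ϖ i k} + (1-γ) e^{j ϖ i k}`. -/
def StildeG (N n : ℕ) (γ : ℂ) : Matrix (Fin n) (Fin N) ℂ := fun i k =>
  γ * Complex.exp (-(Complex.I * (2 * Real.pi / N) * i.val * k.val)) +
    (1 - γ) * Complex.exp (Complex.I * (2 * Real.pi / N) * i.val * k.val)

/-- The real matrix `S` with entries `cos(ϖ i k)`. -/
def Smat (N n : ℕ) : Matrix (Fin n) (Fin N) ℝ := fun i k =>
  Real.cos (2 * Real.pi / N * i.val * k.val)

/-- `ξ_m = (1, cos(mϖ), …, cos((N-1)mϖ))`. -/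
def xi (N m : ℕ) : Fin N → ℝ := fun t => Real.cos (t.val * m * (2 * Real.pi / N))

/-- `ζ_m = (0, sin(mϖ), …, sin((N-1)mϖ))`. -/
def zeta (N m : ℕ) : Fin N → ℝ := fun t => Real.sin (t.val * m * (2 * Real.pi / N))

/-- The orthogonal matrix `W` whose columns are
`√(2/N)·[ξ_0/√2, ξ_1, …, ξ_{N/2-1}, ξ_{N/2}/√2, ζ_{N/2-1}, …, ζ_1]` for even `N` and
`√(2/N)·[ξ_0/√2, ξ_1, …, ξ_{(N-1)/2}, ζ_{(N-1)/2}, …, ζ_1]` for odd `N`. -/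
def Wmat (N : ℕ) : Matrix (Fin N) (Fin N) ℝ := fun t c =>
  Real.sqrt (2 / N) *
    (if 2 * c.val ≤ N then
      (if c.val = 0 ∨ 2 * c.val = N then (Real.sqrt 2)⁻¹ else 1) * xi N c.val t
    else zeta N (N - c.val) t)

/-- The cyclic shift (unit delay) matrix: `A t s = 1` iff `t ≡ s + 1 (mod N)`. -/
def shiftA (N : ℕ) : Matrix (Fin N) (Fin N) ℝ := fun t s =>
  if (s.val + 1) % N = t.val then 1 else 0

/-- The set `X̃(r)` of real vectors `x` with `S̃ x = r`, nonnegative entries,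
and the symmetry `x_k = x_{N-k}` for `1 ≤ k ≤ N-1`. -/
def Xset (N n : ℕ) (r : Fin n → ℝ) : Set (Fin N → ℝ) :=
  {x | (Stilde N n).mulVec (fun k => (x k : ℂ)) = (fun i => (r i : ℂ)) ∧
    (∀ k, 0 ≤ x k) ∧
    (∀ k : Fin N, ∀ hk : 1 ≤ k.val, x k = x ⟨N - k.val, Nat.sub_lt k.pos hk⟩)}

/-- The set `ℱ = {f(u) : uᵀu = C}` of attainable autocovariances. -/
def Fset (N n : ℕ) (C : ℝ) : Set (Fin n → ℝ) :=
  {r | ∃ u : Fin N → ℝ, (∑ t, u t * u t) = C ∧ autocov N n u = r}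

/-- Membership in the family `Λ_Q` (for even `N`): diagonal entries `1` at positions `0`
and `N/2`, arbitrary `2×2` unitary blocks at index pairs `{i, N-i}` for `1 ≤ i ≤ N/2-1`,
and all other entries zero. -/
def memLamQ {N : ℕ} (L : Matrix (Fin N) (Fin N) ℂ) : Prop :=
  (∀ a : Fin N, a.val = 0 → L a a = 1) ∧
  (∀ a : Fin N, 2 * a.val = N → L a a = 1) ∧
  (∀ a b : Fin N, 1 ≤ a.val → 2 * a.val < N → a.val + b.val = N →
    (!![L a a, L a b; L b a, L b b]ᴴ * !![L a a, L a b; L b a, L b b] = 1 ∧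
      !![L a a, L a b; L b a, L b b] * !![L a a, L a b; L b a, L b b]ᴴ = 1)) ∧
  (∀ a b : Fin N, ¬(a = b ∨ a.val + b.val = N) → L a b = 0)


noncomputable def eN (N : ℕ) (m : ℤ) : ℂ :=
  Complex.exp (Complex.I * (2 * Real.pi / N) * m)

lemma eN_add (N : ℕ) (a b : ℤ) : eN N (a + b) = eN N a * eN N b := by
  rw [eN, eN, eN, ← Complex.exp_add]; congr 1; push_cast; ring

lemma eN_zero (N : ℕ) : eN N 0 = 1 := by simp [eN]

lemma eN_dvd (N : ℕ) (hN : N ≠ 0) {m : ℤ} (h : (N : ℤ) ∣ m) : eN N m = 1 := by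
  obtain ⟨q, rfl⟩ := h
  rw [eN]
  have hNC : (N : ℂ) ≠ 0 := Nat.cast_ne_zero.mpr hN
  have h2 : Complex.I * (2 * Real.pi / N) * (((N : ℤ) * q : ℤ) : ℂ)
      = (q : ℂ) * (2 * Real.pi * Complex.I) := by
    push_cast; field_simp
  rw [h2, Complex.exp_int_mul_two_pi_mul_I]

lemma eN_congr (N : ℕ) (hN : N ≠ 0) {a b : ℤ} (h : (N : ℤ) ∣ (a - b)) : eN N a = eN N b := by
  have h1 : eN N a = eN N (a - b) * eN N b := by rw [← eN_add]; ring_nf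
  rw [h1, eN_dvd N hN h, one_mul]

lemma eN_conj (N : ℕ) (m : ℤ) : (starRingEnd ℂ) (eN N m) = eN N (-m) := by
  rw [eN, eN, ← Complex.exp_conj]
  congr 1
  simp only [_root_.map_mul, Complex.conj_I, map_div₀, map_ofNat, Complex.conj_ofReal,
    map_natCast, map_intCast]
  push_cast; ring

lemma eN_ne_one (N : ℕ) (hN : N ≠ 0) {m : ℤ} (h : ¬ (N : ℤ) ∣ m) : eN N m ≠ 1 := by
  intro hc
  rw [eN, Complex.exp_eq_one_iff] at hc
  obtain ⟨q, hq⟩ := hc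
  apply h
  refine ⟨q, ?_⟩
  have hNC : (N : ℂ) ≠ 0 := Nat.cast_ne_zero.mpr hN
  have hI : Complex.I ≠ 0 := Complex.I_ne_zero
  have hpi : (Real.pi : ℂ) ≠ 0 := by
    exact_mod_cast Real.pi_ne_zero
  have : (m : ℂ) = (q : ℂ) * N := by
    field_simp at hq
    have h2 : Complex.I * (2 * (Real.pi : ℂ) * m) = Complex.I * (q * (2 * Real.pi) * N) := by
      linear_combination (2 * Complex.I * Real.pi) * hq
    have h3 := mul_left_cancel₀ hI h2
    have h4 : (2 : ℂ) * Real.pi ≠ 0 := by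
      simp [hpi]
    have h5 := mul_left_cancel₀ h4 (by linear_combination h3 : (2*(Real.pi:ℂ))*m = (2*Real.pi)*(q*N))
    exact h5
  have : m = q * (N:ℤ) := by exact_mod_cast this
  linear_combination this

lemma eN_pow (N : ℕ) (m : ℤ) (k : ℕ) : eN N (m * k) = (eN N m) ^ k := by
  rw [eN, eN, ← Complex.exp_nat_mul]; congr 1; push_cast; ring

lemma eN_orth (N : ℕ) (hN : N ≠ 0) (m : ℤ) :
    ∑ t : Fin N, eN N (m * t.val) = if (N : ℤ) ∣ m then (N : ℂ) else 0 := by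
  split_ifs with h
  · have : ∀ t : Fin N, eN N (m * t.val) = 1 := fun t => eN_dvd N hN (h.mul_right _)
    simp [this]
  · have hz : eN N m ≠ 1 := eN_ne_one N hN h
    have hcalc : ∑ t : Fin N, eN N (m * t.val) = ∑ i ∈ Finset.range N, (eN N m) ^ i := by
      rw [← Fin.sum_univ_eq_sum_range (fun i => (eN N m) ^ i) N]
      exact Finset.sum_congr rfl fun t _ => eN_pow N m t.val
    rw [hcalc, geom_sum_eq hz]
    have hNN : (eN N m) ^ N = 1 := by
      rw [← eN_pow]
      exact eN_dvd N hN ⟨m, mul_comm _ _⟩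
    rw [hNN]
    simp
lemma fin_eq_of_dvd (N : ℕ) (a b : Fin N) (h : (N : ℤ) ∣ ((a.val : ℤ) - b.val)) : a = b := by
  have ha : (a.val : ℤ) < N := by exact_mod_cast a.2
  have hb : (b.val : ℤ) < N := by exact_mod_cast b.2
  have ha0 : (0:ℤ) ≤ a.val := Int.ofNat_nonneg _
  have hb0 : (0:ℤ) ≤ b.val := Int.ofNat_nonneg _
  have := Int.eq_zero_of_abs_lt_dvd h (abs_lt.mpr ⟨by omega, by omega⟩)
  have : (a.val : ℤ) = b.val := by omega
  exact Fin.ext (by exact_mod_cast this)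

lemma neg_val_add (N : ℕ) (k : Fin N) : (N : ℤ) ∣ (((-k : Fin N).val : ℤ) + k.val) := by
  have hval : ((-k : Fin N)).val = (N - k.val) % N := rfl
  by_cases hk : k.val = 0
  · rw [hval, hk]
    norm_num [Nat.mod_self]
  · have hlt : k.val < N := k.2
    have h1 : (N - k.val) % N = N - k.val := Nat.mod_eq_of_lt (by omega)
    rw [hval, h1]
    refine ⟨1, ?_⟩
    have : ((N - k.val : ℕ) : ℤ) = (N : ℤ) - k.val := by
      push_cast [Nat.cast_sub hlt.le]; ring
    rw [this]; ring

lemma neg_fin_val (N : ℕ) (k : Fin N) (hk : 1 ≤ k.val) :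
    (-k : Fin N) = ⟨N - k.val, Nat.sub_lt k.pos hk⟩ := by
  have hlt : k.val < N := k.2
  exact Fin.ext (Nat.mod_eq_of_lt (by omega))

lemma sum_neg_reindex (N : ℕ) (hN : N ≠ 0) (f : Fin N → ℂ) :
    ∑ k : Fin N, f (-k) = ∑ k : Fin N, f k := by
  haveI : NeZero N := ⟨hN⟩
  exact Fintype.sum_equiv (Equiv.neg (Fin N)) _ _ (fun k => rfl)

lemma sum_if_collapse (N : ℕ) (g : Fin N → ℂ) (v : Fin N → ℤ) (s₀ : Fin N)
    (h : ∀ s, (N : ℤ) ∣ v s ↔ s = s₀) :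
    ∑ s : Fin N, g s * (if (N : ℤ) ∣ v s then (N : ℂ) else 0) = N * g s₀ := by
  classical
  rw [Finset.sum_eq_single s₀]
  · rw [if_pos ((h s₀).mpr rfl)]; ring
  · intro b _ hb
    rw [if_neg (fun hc => hb ((h b).mp hc))]; ring
  · intro hs; exact absurd (Finset.mem_univ s₀) hs

lemma shift_dvd (N : ℕ) (d : ℕ) (hd : d ≤ N) (t : Fin N) :
    (N : ℤ) ∣ ((((t.val + (N - d)) % N : ℕ) : ℤ) - t.val + d) := by
  set q := (t.val + (N - d)) / N with hq
  have hmod := Nat.div_add_mod (t.val + (N - d)) N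
  refine ⟨1 - q, ?_⟩
  have hZ : (N : ℤ) * q + (((t.val + (N - d)) % N : ℕ) : ℤ) = (t.val : ℤ) + ((N - d : ℕ) : ℤ) := by
    exact_mod_cast hmod
  rw [Nat.cast_sub hd] at hZ
  linear_combination hZ

lemma shift_iff (N : ℕ) (hN : 0 < N) (d : ℕ) (hd : d ≤ N) (t s : Fin N) :
    (N : ℤ) ∣ ((s.val : ℤ) - t.val + d) ↔ s = (⟨(t.val + (N - d)) % N, Nat.mod_lt _ hN⟩ : Fin N) := by
  set s₀ : Fin N := ⟨(t.val + (N - d)) % N, Nat.mod_lt _ hN⟩ with hs₀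
  have h0 : (N : ℤ) ∣ ((s₀.val : ℤ) - t.val + d) := shift_dvd N d hd t
  constructor
  · intro h
    exact fin_eq_of_dvd N s s₀ (by
      have := dvd_sub h h0
      have heq : ((s.val : ℤ) - t.val + d) - ((s₀.val : ℤ) - t.val + d) = (s.val : ℤ) - s₀.val := by ring
      rwa [heq] at this)
  · rintro rfl; exact h0
lemma forward_lemma (N : ℕ) (hN : 0 < N) (u : Fin N → ℝ) :
    ∃ x : Fin N → ℝ, (∀ k, 0 ≤ x k) ∧ (∀ k : Fin N, x (-k) = x k) ∧
      ∀ d : ℕ, d ≤ N →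
        ∑ k : Fin N, (x k : ℂ) * eN N (d * k.val)
          = ∑ t : Fin N, (u t : ℂ) * (u (⟨(t.val + (N - d)) % N, Nat.mod_lt _ hN⟩ : Fin N) : ℂ) := by
  have hN0 : N ≠ 0 := hN.ne'
  have hNC : (N : ℂ) ≠ 0 := Nat.cast_ne_zero.mpr hN0
  set U : Fin N → ℂ := fun k => ∑ t : Fin N, (u t : ℂ) * eN N (-((k.val : ℤ) * t.val)) with hU
  have hconjU : ∀ k : Fin N, (starRingEnd ℂ) (U k) = ∑ s : Fin N, (u s : ℂ) * eN N ((k.val : ℤ) * s.val) := by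
    intro k
    rw [hU, map_sum]
    refine Finset.sum_congr rfl fun s _ => ?_
    rw [_root_.map_mul, eN_conj, Complex.conj_ofReal, neg_neg]
  refine ⟨fun k => Complex.normSq (U k) / N, fun k => div_nonneg (Complex.normSq_nonneg _) (Nat.cast_nonneg N), ?_, ?_⟩
  · -- symmetry
    intro k
    have hUneg : U (-k) = (starRingEnd ℂ) (U k) := by
      rw [hconjU, hU]
      refine Finset.sum_congr rfl fun s _ => ?_
      congr 1
      refine eN_congr N hN0 ?_
      have h1 : (-(((-k : Fin N).val : ℤ) * s.val)) - (k.val : ℤ) * s.val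
          = -((s.val : ℤ) * (((-k : Fin N).val : ℤ) + k.val)) := by ring
      rw [h1]
      exact dvd_neg.mpr ((neg_val_add N k).mul_left _)
    simp only [hUneg, Complex.normSq_conj]
  · intro d hd
    have hterm : ∀ k : Fin N, ((Complex.normSq (U k) / N : ℝ) : ℂ) * eN N (d * k.val)
        = (N : ℂ)⁻¹ * ∑ t : Fin N, ∑ s : Fin N,
            ((u t : ℂ) * u s) * eN N (((s.val : ℤ) - t.val + d) * k.val) := by
      intro k
      have h1 : ((Complex.normSq (U k) : ℝ) : ℂ) = U k * (starRingEnd ℂ) (U k) :=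
        (Complex.mul_conj _).symm
      have h2 : U k * (starRingEnd ℂ) (U k)
          = ∑ t : Fin N, ∑ s : Fin N,
              ((u t : ℂ) * u s) * (eN N (-((k.val : ℤ) * t.val)) * eN N ((k.val : ℤ) * s.val)) := by
        rw [hconjU, hU, Finset.sum_mul_sum]
        exact Finset.sum_congr rfl fun t _ => Finset.sum_congr rfl fun s _ => by ring
      rw [Complex.ofReal_div, h1, h2, Complex.ofReal_natCast]
      rw [div_mul_eq_mul_div, div_eq_inv_mul, Finset.sum_mul]
      congr 1
      refine Finset.sum_congr rfl fun t _ => ?_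
      rw [Finset.sum_mul]
      refine Finset.sum_congr rfl fun s _ => ?_
      have h3 : eN N (-((k.val : ℤ) * t.val)) * eN N ((k.val : ℤ) * s.val) * eN N (d * k.val)
          = eN N (((s.val : ℤ) - t.val + d) * k.val) := by
        rw [← eN_add, ← eN_add]
        congr 1
        ring
      calc ((u t : ℂ) * u s) * (eN N (-((k.val : ℤ) * t.val)) * eN N ((k.val : ℤ) * s.val)) * eN N (d * k.val)
          = ((u t : ℂ) * u s) * (eN N (-((k.val : ℤ) * t.val)) * eN N ((k.val : ℤ) * s.val) * eN N (d * k.val)) := by ring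
        _ = ((u t : ℂ) * u s) * eN N (((s.val : ℤ) - t.val + d) * k.val) := by rw [h3]
    calc ∑ k : Fin N, ((Complex.normSq (U k) / N : ℝ) : ℂ) * eN N (d * k.val)
        = ∑ k : Fin N, (N : ℂ)⁻¹ * ∑ t : Fin N, ∑ s : Fin N,
            ((u t : ℂ) * u s) * eN N (((s.val : ℤ) - t.val + d) * k.val) :=
          Finset.sum_congr rfl fun k _ => hterm k
      _ = (N : ℂ)⁻¹ * ∑ t : Fin N, ∑ s : Fin N, ((u t : ℂ) * u s) *
            ∑ k : Fin N, eN N (((s.val : ℤ) - t.val + d) * k.val) := by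
          rw [← Finset.mul_sum]
          congr 1
          rw [Finset.sum_comm]
          refine Finset.sum_congr rfl fun t _ => ?_
          rw [Finset.sum_comm]
          refine Finset.sum_congr rfl fun s _ => ?_
          rw [Finset.mul_sum]
      _ = (N : ℂ)⁻¹ * ∑ t : Fin N, ∑ s : Fin N, ((u t : ℂ) * u s) *
            (if (N : ℤ) ∣ ((s.val : ℤ) - t.val + d) then (N : ℂ) else 0) := by
          congr 1
          refine Finset.sum_congr rfl fun t _ => Finset.sum_congr rfl fun s _ => ?_
          rw [eN_orth N hN0]
      _ = (N : ℂ)⁻¹ * ∑ t : Fin N, (N : ℂ) *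
            ((u t : ℂ) * u (⟨(t.val + (N - d)) % N, Nat.mod_lt _ hN⟩ : Fin N)) := by
          congr 1
          refine Finset.sum_congr rfl fun t _ => ?_
          exact sum_if_collapse N (fun s => (u t : ℂ) * u s) _ _ (shift_iff N hN d hd t)
      _ = ∑ t : Fin N, (u t : ℂ) * u (⟨(t.val + (N - d)) % N, Nat.mod_lt _ hN⟩ : Fin N) := by
          rw [Finset.mul_sum]
          refine Finset.sum_congr rfl fun t _ => ?_
          field_simp
lemma backward_lemma (N : ℕ) (hN : 0 < N) (x : Fin N → ℝ) (hpos : ∀ k, 0 ≤ x k)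
    (hsym : ∀ k : Fin N, x (-k) = x k) :
    ∃ u : Fin N → ℝ, ∀ d : ℕ, d ≤ N →
      ∑ t : Fin N, (u t : ℂ) * (u (⟨(t.val + (N - d)) % N, Nat.mod_lt _ hN⟩ : Fin N) : ℂ)
        = ∑ k : Fin N, (x k : ℂ) * eN N (d * k.val) := by
  have hN0 : N ≠ 0 := hN.ne'
  have hNC : (N : ℂ) ≠ 0 := Nat.cast_ne_zero.mpr hN0
  set G : Fin N → ℂ := fun t => ∑ k : Fin N, ((Real.sqrt (x k) : ℝ) : ℂ) * eN N ((k.val : ℤ) * t.val) with hG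
  -- exponent congruence for negation
  have hnegexp : ∀ (k : Fin N) (m : ℤ), eN N (-(((-k : Fin N).val : ℤ) * m)) = eN N ((k.val : ℤ) * m) := by
    intro k m
    refine eN_congr N hN0 ?_
    have h1 : (-(((-k : Fin N).val : ℤ) * m)) - (k.val : ℤ) * m
        = -(m * (((-k : Fin N).val : ℤ) + k.val)) := by ring
    rw [h1]
    exact dvd_neg.mpr ((neg_val_add N k).mul_left _)
  have hreal : ∀ t : Fin N, (starRingEnd ℂ) (G t) = G t := by
    intro t
    rw [hG, map_sum]
    have h1 : ∀ k : Fin N, (starRingEnd ℂ) (((Real.sqrt (x k) : ℝ) : ℂ) * eN N ((k.val : ℤ) * t.val))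
        = ((Real.sqrt (x k) : ℝ) : ℂ) * eN N (-((k.val : ℤ) * t.val)) := by
      intro k
      rw [_root_.map_mul, eN_conj, Complex.conj_ofReal]
    rw [Finset.sum_congr rfl fun k _ => h1 k]
    rw [← sum_neg_reindex N hN0 (fun k => ((Real.sqrt (x k) : ℝ) : ℂ) * eN N (-((k.val : ℤ) * t.val)))]
    refine Finset.sum_congr rfl fun k _ => ?_
    rw [hsym k, hnegexp k t.val]
  set u : Fin N → ℝ := fun t => (G t).re * (Real.sqrt N)⁻¹ with hu
  have huC : ∀ t : Fin N, (u t : ℂ) = G t * (((Real.sqrt N : ℝ) : ℂ))⁻¹ := by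
    intro t
    have h1 : ((G t).re : ℂ) = G t := Complex.conj_eq_iff_re.mp (hreal t)
    rw [hu]
    push_cast
    rw [h1]
  refine ⟨u, ?_⟩
  intro d hd
  have hsqrtN : (((Real.sqrt N : ℝ) : ℂ))⁻¹ * (((Real.sqrt N : ℝ) : ℂ))⁻¹ = (N : ℂ)⁻¹ := by
    rw [← mul_inv]
    congr 1
    rw [← Complex.ofReal_mul, Real.mul_self_sqrt (Nat.cast_nonneg N)]
    norm_num
  -- shift index
  set σ : Fin N → Fin N := fun t => (⟨(t.val + (N - d)) % N, Nat.mod_lt _ hN⟩ : Fin N) with hσ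
  have hshift : ∀ (t : Fin N) (l : Fin N),
      eN N ((l.val : ℤ) * (σ t).val) = eN N ((l.val : ℤ) * t.val) * eN N (-((l.val : ℤ) * d)) := by
    intro t l
    rw [← eN_add]
    refine eN_congr N hN0 ?_
    have h0 := shift_dvd N d hd t
    have h1 : (l.val : ℤ) * (σ t).val - ((l.val : ℤ) * t.val + -((l.val : ℤ) * d))
        = (l.val : ℤ) * (((σ t).val : ℤ) - t.val + d) := by ring
    rw [h1]
    exact h0.mul_left _
  have hGG : ∀ t : Fin N, G t * G (σ t)
      = ∑ k : Fin N, ∑ l : Fin N,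
          (((Real.sqrt (x k) : ℝ) : ℂ) * ((Real.sqrt (x l) : ℝ) : ℂ) * eN N (-((l.val : ℤ) * d)))
            * eN N (((k.val : ℤ) + l.val) * t.val) := by
    intro t
    rw [hG, Finset.sum_mul_sum]
    refine Finset.sum_congr rfl fun k _ => Finset.sum_congr rfl fun l _ => ?_
    rw [hshift t l]
    have h2 : eN N ((k.val : ℤ) * t.val) * eN N ((l.val : ℤ) * t.val)
        = eN N (((k.val : ℤ) + l.val) * t.val) := by
      rw [← eN_add]; congr 1; ring
    calc ((Real.sqrt (x k) : ℝ) : ℂ) * eN N ((k.val : ℤ) * t.val)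
          * (((Real.sqrt (x l) : ℝ) : ℂ) * (eN N ((l.val : ℤ) * t.val) * eN N (-((l.val : ℤ) * d))))
        = (((Real.sqrt (x k) : ℝ) : ℂ) * ((Real.sqrt (x l) : ℝ) : ℂ) * eN N (-((l.val : ℤ) * d)))
            * (eN N ((k.val : ℤ) * t.val) * eN N ((l.val : ℤ) * t.val)) := by ring
      _ = _ := by rw [h2]
  have hcollapse : ∀ k : Fin N, ∀ l : Fin N, ((N : ℤ) ∣ ((l.val : ℤ) - (-k : Fin N).val) ↔ l = -k) := by
    intro k l
    constructor
    · intro h; exact fin_eq_of_dvd N l (-k) h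
    · rintro rfl; simp
  calc ∑ t : Fin N, (u t : ℂ) * (u (σ t) : ℂ)
      = (N : ℂ)⁻¹ * ∑ t : Fin N, G t * G (σ t) := by
        rw [Finset.mul_sum]
        refine Finset.sum_congr rfl fun t _ => ?_
        rw [huC, huC]
        calc G t * (((Real.sqrt N : ℝ) : ℂ))⁻¹ * (G (σ t) * (((Real.sqrt N : ℝ) : ℂ))⁻¹)
            = ((((Real.sqrt N : ℝ) : ℂ))⁻¹ * (((Real.sqrt N : ℝ) : ℂ))⁻¹) * (G t * G (σ t)) := by ring
          _ = (N : ℂ)⁻¹ * (G t * G (σ t)) := by rw [hsqrtN]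
    _ = (N : ℂ)⁻¹ * ∑ k : Fin N, ∑ l : Fin N,
          (((Real.sqrt (x k) : ℝ) : ℂ) * ((Real.sqrt (x l) : ℝ) : ℂ) * eN N (-((l.val : ℤ) * d)))
            * ∑ t : Fin N, eN N (((k.val : ℤ) + l.val) * t.val) := by
        congr 1
        rw [Finset.sum_congr rfl fun t _ => hGG t]
        rw [Finset.sum_comm]
        refine Finset.sum_congr rfl fun k _ => ?_
        rw [Finset.sum_comm]
        refine Finset.sum_congr rfl fun l _ => ?_
        rw [Finset.mul_sum]
    _ = (N : ℂ)⁻¹ * ∑ k : Fin N, ∑ l : Fin N,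
          (((Real.sqrt (x k) : ℝ) : ℂ) * ((Real.sqrt (x l) : ℝ) : ℂ) * eN N (-((l.val : ℤ) * d)))
            * (if (N : ℤ) ∣ ((l.val : ℤ) - (-k : Fin N).val) then (N : ℂ) else 0) := by
        congr 1
        refine Finset.sum_congr rfl fun k _ => Finset.sum_congr rfl fun l _ => ?_
        rw [eN_orth N hN0]
        have hiff : ((N : ℤ) ∣ ((k.val : ℤ) + l.val)) ↔ ((N : ℤ) ∣ ((l.val : ℤ) - (-k : Fin N).val)) := by
          constructor
          · intro h
            have h2 : ((l.val : ℤ) - (-k : Fin N).val)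
                = ((k.val : ℤ) + l.val) - (((-k : Fin N).val : ℤ) + k.val) := by ring
            rw [h2]
            exact dvd_sub h (neg_val_add N k)
          · intro h
            have h2 : ((k.val : ℤ) + l.val)
                = ((l.val : ℤ) - (-k : Fin N).val) + (((-k : Fin N).val : ℤ) + k.val) := by ring
            rw [h2]
            exact dvd_add h (neg_val_add N k)
        by_cases hc : (N : ℤ) ∣ ((k.val : ℤ) + l.val)
        · rw [if_pos hc, if_pos (hiff.mp hc)]
        · rw [if_neg hc, if_neg (fun h => hc (hiff.mpr h))]
    _ = (N : ℂ)⁻¹ * ∑ k : Fin N, (N : ℂ) *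
          (((Real.sqrt (x k) : ℝ) : ℂ) * ((Real.sqrt (x (-k)) : ℝ) : ℂ)
            * eN N (-((((-k : Fin N).val : ℤ)) * d))) := by
        congr 1
        refine Finset.sum_congr rfl fun k _ => ?_
        exact sum_if_collapse N
          (fun l => ((Real.sqrt (x k) : ℝ) : ℂ) * ((Real.sqrt (x l) : ℝ) : ℂ) * eN N (-((l.val : ℤ) * d)))
          _ _ (hcollapse k)
    _ = ∑ k : Fin N, (x k : ℂ) * eN N (d * k.val) := by
        rw [Finset.mul_sum]
        refine Finset.sum_congr rfl fun k _ => ?_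
        have h1 : ((Real.sqrt (x k) : ℝ) : ℂ) * ((Real.sqrt (x (-k)) : ℝ) : ℂ) = (x k : ℂ) := by
          rw [hsym k, ← Complex.ofReal_mul, Real.mul_self_sqrt (hpos k)]
        have h2 : eN N (-((((-k : Fin N).val : ℤ)) * d)) = eN N (d * k.val) := by
          rw [hnegexp k d]
          congr 1
          ring
        rw [h1, h2]
        field_simp
lemma symm_to_neg (N : ℕ) (x : Fin N → ℝ)
    (h : ∀ k : Fin N, ∀ hk : 1 ≤ k.val, x k = x ⟨N - k.val, Nat.sub_lt k.pos hk⟩) :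
    ∀ k : Fin N, x (-k) = x k := by
  intro k
  by_cases hk : 1 ≤ k.val
  · rw [neg_fin_val N k hk]
    exact (h k hk).symm
  · have hk0 : k.val = 0 := by omega
    have : (-k : Fin N) = k := by
      refine Fin.ext ?_
      show (N - k.val) % N = k.val
      rw [hk0]
      simp
    rw [this]

lemma neg_to_symm (N : ℕ) (x : Fin N → ℝ) (h : ∀ k : Fin N, x (-k) = x k) :
    ∀ k : Fin N, ∀ hk : 1 ≤ k.val, x k = x ⟨N - k.val, Nat.sub_lt k.pos hk⟩ := by
  intro k hk
  rw [← h k, neg_fin_val N k hk]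

lemma mulVec_Stilde_eq (N n : ℕ) (x : Fin N → ℝ) (i : Fin n) :
    (Stilde N n).mulVec (fun k => (x k : ℂ)) i
      = ∑ k : Fin N, (x k : ℂ) * eN N ((i.val : ℤ) * k.val) := by
  rw [Matrix.mulVec, dotProduct]
  refine Finset.sum_congr rfl fun k _ => ?_
  have h1 : Stilde N n i k = eN N ((i.val : ℤ) * k.val) := by
    rw [Stilde, eN]
    congr 1
    push_cast
    ring
  rw [h1]
  ring

lemma real_sum (N : ℕ) (hN : N ≠ 0) (x : Fin N → ℝ) (hsym : ∀ k : Fin N, x (-k) = x k) (m : ℕ) :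
    (starRingEnd ℂ) (∑ k : Fin N, (x k : ℂ) * eN N ((m : ℤ) * k.val))
      = ∑ k : Fin N, (x k : ℂ) * eN N ((m : ℤ) * k.val) := by
  rw [map_sum]
  have h1 : ∀ k : Fin N, (starRingEnd ℂ) ((x k : ℂ) * eN N ((m : ℤ) * k.val))
      = (x k : ℂ) * eN N (-((m : ℤ) * k.val)) := by
    intro k
    rw [_root_.map_mul, eN_conj, Complex.conj_ofReal]
  rw [Finset.sum_congr rfl fun k _ => h1 k]
  rw [← sum_neg_reindex N hN (fun k => (x k : ℂ) * eN N (-((m : ℤ) * k.val)))]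
  refine Finset.sum_congr rfl fun k _ => ?_
  rw [hsym k]
  congr 1
  refine eN_congr N hN ?_
  have h2 : (-((m : ℤ) * ((-k : Fin N).val : ℤ))) - (m : ℤ) * k.val
      = -((m : ℤ) * ((((-k : Fin N).val : ℤ)) + k.val)) := by ring
  rw [h2]
  exact dvd_neg.mpr ((neg_val_add N k).mul_left _)

/-- the set `X̃` (simplex with conjugate symmetry and total mass `C`)
is convex, `S̃x` is real for every `x ∈ X̃`, and `ℱ = {f(u) : uᵀu = C} = S̃·X̃`;
in particular `ℱ` is convex. -/
theorem stmt19 (N n : ℕ) (hn : 1 ≤ n) (hNn : n ≤ N) (C : ℝ) (hC : 0 < C) :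
    Convex ℝ {x : Fin N → ℝ | (∑ k, x k) = C ∧ (∀ k, 0 ≤ x k) ∧
      (∀ k : Fin N, ∀ hk : 1 ≤ k.val, x k = x ⟨N - k.val, Nat.sub_lt k.pos hk⟩)} ∧
    (∀ x ∈ {x : Fin N → ℝ | (∑ k, x k) = C ∧ (∀ k, 0 ≤ x k) ∧
        (∀ k : Fin N, ∀ hk : 1 ≤ k.val, x k = x ⟨N - k.val, Nat.sub_lt k.pos hk⟩)},
      ∀ i : Fin n, (((Stilde N n).mulVec fun k => (x k : ℂ)) i).im = 0) ∧
    Fset N n C = {y : Fin n → ℝ |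
      ∃ x ∈ {x : Fin N → ℝ | (∑ k, x k) = C ∧ (∀ k, 0 ≤ x k) ∧
        (∀ k : Fin N, ∀ hk : 1 ≤ k.val, x k = x ⟨N - k.val, Nat.sub_lt k.pos hk⟩)},
      ∀ i : Fin n, (y i : ℂ) = ((Stilde N n).mulVec fun k => (x k : ℂ)) i} ∧
    Convex ℝ (Fset N n C) := by
  have hNpos : 0 < N := lt_of_lt_of_le hn hNn
  have hN0 : N ≠ 0 := hNpos.ne'
  set K : Set (Fin N → ℝ) := {x : Fin N → ℝ | (∑ k, x k) = C ∧ (∀ k, 0 ≤ x k) ∧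
      (∀ k : Fin N, ∀ hk : 1 ≤ k.val, x k = x ⟨N - k.val, Nat.sub_lt k.pos hk⟩)} with hK
  -- index simplification for d = 0
  have hidx0 : ∀ t : Fin N, (⟨(t.val + (N - 0)) % N, Nat.mod_lt _ hNpos⟩ : Fin N) = t := by
    intro t
    refine Fin.ext ?_
    show (t.val + (N - 0)) % N = t.val
    rw [Nat.sub_zero, Nat.add_mod_right]
    exact Nat.mod_eq_of_lt t.2
  have hconv : Convex ℝ K := by
    intro x hx y hy a b ha hb hab
    obtain ⟨hxs, hxp, hxsym⟩ := hx
    obtain ⟨hys, hyp, hysym⟩ := hy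
    refine ⟨?_, ?_, ?_⟩
    · simp only [Pi.add_apply, Pi.smul_apply, smul_eq_mul]
      rw [Finset.sum_add_distrib, ← Finset.mul_sum, ← Finset.mul_sum, hxs, hys]
      linear_combination C * hab
    · intro k
      exact add_nonneg (mul_nonneg ha (hxp k)) (mul_nonneg hb (hyp k))
    · intro k hk
      simp only [Pi.add_apply, Pi.smul_apply, smul_eq_mul]
      rw [hxsym k hk, hysym k hk]
  have hrealK : ∀ x ∈ K, ∀ i : Fin n, (((Stilde N n).mulVec fun k => (x k : ℂ)) i).im = 0 := by
    intro x hx i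
    rw [mulVec_Stilde_eq, ← Complex.conj_eq_iff_im]
    exact real_sum N hN0 x (symm_to_neg N x hx.2.2) i.val
  have heq : Fset N n C = {y : Fin n → ℝ |
      ∃ x ∈ K, ∀ i : Fin n, (y i : ℂ) = ((Stilde N n).mulVec fun k => (x k : ℂ)) i} := by
    ext r
    constructor
    · rintro ⟨u, huC, hauto⟩
      obtain ⟨x, hxp, hxsym, hxd⟩ := forward_lemma N hNpos u
      have hd0 := hxd 0 (Nat.zero_le N)
      refine ⟨x, ⟨?_, hxp, neg_to_symm N x hxsym⟩, ?_⟩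
      · have hL : ∑ k : Fin N, (x k : ℂ) * eN N (((0 : ℕ) : ℤ) * k.val) = ((∑ k, x k : ℝ) : ℂ) := by
          push_cast
          refine Finset.sum_congr rfl fun k _ => ?_
          rw [show ((0 : ℤ) * (k.val : ℤ)) = 0 by ring, eN_zero, mul_one]
        have hR : ∑ t : Fin N, (u t : ℂ)
            * (u (⟨(t.val + (N - 0)) % N, Nat.mod_lt _ hNpos⟩ : Fin N) : ℂ) = ((C : ℝ) : ℂ) := by
          rw [← huC]
          push_cast
          refine Finset.sum_congr rfl fun t _ => ?_
          rw [hidx0 t]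
        have := hL.symm.trans (hd0.trans hR)
        exact_mod_cast this
      · intro i
        rw [mulVec_Stilde_eq]
        have hi := hxd i.val (le_of_lt (lt_of_lt_of_le i.2 hNn))
        rw [hi, ← hauto]
        show ((autocov N n u i : ℝ) : ℂ) = _
        rw [autocov]
        push_cast
        rfl
    · rintro ⟨x, ⟨hxsum, hxp, hxsymm⟩, hr⟩
      obtain ⟨u, hud⟩ := backward_lemma N hNpos x hxp (symm_to_neg N x hxsymm)
      have hd0 := hud 0 (Nat.zero_le N)
      refine ⟨u, ?_, ?_⟩
      · have hL : ∑ t : Fin N, (u t : ℂ)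
            * (u (⟨(t.val + (N - 0)) % N, Nat.mod_lt _ hNpos⟩ : Fin N) : ℂ)
              = ((∑ t, u t * u t : ℝ) : ℂ) := by
          push_cast
          refine Finset.sum_congr rfl fun t _ => ?_
          rw [hidx0 t]
        have hR : ∑ k : Fin N, (x k : ℂ) * eN N (((0 : ℕ) : ℤ) * k.val) = ((C : ℝ) : ℂ) := by
          rw [← hxsum]
          push_cast
          refine Finset.sum_congr rfl fun k _ => ?_
          rw [show ((0 : ℤ) * (k.val : ℤ)) = 0 by ring, eN_zero, mul_one]
        have := hL.symm.trans (hd0.trans hR)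
        exact_mod_cast this
      · funext i
        have hi := hud i.val (le_of_lt (lt_of_lt_of_le i.2 hNn))
        have h2 : ((autocov N n u i : ℝ) : ℂ) = ((r i : ℝ) : ℂ) := by
          rw [hr i, mulVec_Stilde_eq, ← hi, autocov]
          push_cast
          rfl
        exact_mod_cast h2
  refine ⟨hconv, hrealK, heq, ?_⟩
  rw [heq]
  intro y₁ h₁ y₂ h₂ a b ha hb hab
  obtain ⟨x₁, hx₁K, hx₁⟩ := h₁
  obtain ⟨x₂, hx₂K, hx₂⟩ := h₂
  refine ⟨a • x₁ + b • x₂, hconv hx₁K hx₂K ha hb hab, ?_⟩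
  intro i
  rw [mulVec_Stilde_eq]
  have e₁ := hx₁ i
  have e₂ := hx₂ i
  rw [mulVec_Stilde_eq] at e₁ e₂
  simp only [Pi.add_apply, Pi.smul_apply, smul_eq_mul]
  push_cast
  rw [e₁, e₂, Finset.mul_sum, Finset.mul_sum, ← Finset.sum_add_distrib]
  refine Finset.sum_congr rfl fun k _ => ?_
  ring
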